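/- Let (Ω, 𝓕) be a measurable space, μ a σ-finite measure on Ω, α ∈ (0,1), and let P be a fixed probability measure on Ω with density with respect to μ. For each probability measure Q with density with respect to μ, define V(Q) = (1−α)log(1−α) + α log α + (1−α)·KL(P‖M_Q) + α·KL(Q‖M_Q), where M_Q = (1−α)·P + α·Q. Then for every such Q, V(Q) ≥ (1−α)log(1−α) + α log α, and the minimum value (1−α)log(1−α) + α log α is attained if and only if Q = P. -/

import Mathlib

open Real MeasureTheory

/-- Pointwise lower bound: `a - mm ≤ a * log (a / mm)` for nonneg `a, mm`
(with `mm > 0` required when `a > 0`). -/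
lemma uid_term_ge {a mm : ℝ} (ha : 0 ≤ a) (hmm : 0 ≤ mm) (h : a ≠ 0 → 0 < mm) :
    a - mm ≤ a * log (a / mm) := by
  rcases eq_or_lt_of_le ha with h0 | h0
  · simp [← h0]; linarith
  · have hmm' : 0 < mm := h h0.ne'
    have hlog : log (mm / a) ≤ mm / a - 1 := Real.log_le_sub_one_of_pos (by positivity)
    have hinv : log (a / mm) = - log (mm / a) := by
      rw [← Real.log_inv]; congr 1; field_simp
    have : 1 - mm / a ≤ log (a / mm) := by rw [hinv]; linarith
    calc a - mm = a * (1 - mm / a) := by field_simp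
    _ ≤ a * log (a / mm) := by
        exact mul_le_mul_of_nonneg_left this h0.le

/-- Strict version: if `a, mm > 0` and `a ≠ mm` then `a - mm < a * log (a / mm)`. -/
lemma uid_term_gt {a mm : ℝ} (ha : 0 < a) (hmm : 0 < mm) (hne : a ≠ mm) :
    a - mm < a * log (a / mm) := by
  have hne' : mm / a ≠ 1 := by
    intro h
    apply hne
    field_simp at h
    linarith
  have hlog : log (mm / a) < mm / a - 1 := Real.log_lt_sub_one_of_pos (by positivity) hne'
  have hinv : log (a / mm) = - log (mm / a) := by
    rw [← Real.log_inv]; congr 1; field_simp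
  have h1 : 1 - mm / a < log (a / mm) := by rw [hinv]; linarith
  calc a - mm = a * (1 - mm / a) := by field_simp
  _ < a * log (a / mm) := by exact (mul_lt_mul_iff_right₀ ha).2 h1

/-- The key pointwise inequality and equality case for the JSD-type integrand. -/
lemma uid_key {α a b : ℝ} (h0 : 0 < α) (h1 : α < 1) (ha : 0 ≤ a) (hb : 0 ≤ b) :
    0 ≤ (1 - α) * (a * log (a / ((1 - α) * a + α * b)))
        + α * (b * log (b / ((1 - α) * a + α * b))) ∧
    ((1 - α) * (a * log (a / ((1 - α) * a + α * b)))
        + α * (b * log (b / ((1 - α) * a + α * b))) = 0 ↔ a = b) := by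
  have h1α : 0 < 1 - α := by linarith
  set mm := (1 - α) * a + α * b with hmm_def
  have hmm0 : 0 ≤ mm := by positivity
  by_cases hab : a = 0 ∧ b = 0
  · obtain ⟨ha0, hb0⟩ := hab
    simp [hmm_def, ha0, hb0]
  · -- in this case mm > 0
    have hmmpos : 0 < mm := by
      rcases lt_or_ge 0 a with h | h
      · have : 0 < (1 - α) * a := by positivity
        nlinarith [mul_nonneg h0.le hb]
      · have ha0 : a = 0 := le_antisymm h ha
        have hb0 : 0 < b := by
          rcases lt_or_ge 0 b with h' | h'
          · exact h'
          · exact absurd ⟨ha0, le_antisymm h' hb⟩ hab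
        have : 0 < α * b := by positivity
        nlinarith [mul_nonneg h1α.le ha]
    have hga : a - mm ≤ a * log (a / mm) := uid_term_ge ha hmm0 (fun _ => hmmpos)
    have hgb : b - mm ≤ b * log (b / mm) := uid_term_ge hb hmm0 (fun _ => hmmpos)
    have hzero : (1 - α) * (a - mm) + α * (b - mm) = 0 := by
      simp only [hmm_def]; ring
    constructor
    · nlinarith [mul_le_mul_of_nonneg_left hga h1α.le, mul_le_mul_of_nonneg_left hgb h0.le]
    · constructor
      · intro heq
        -- each gap must vanish
        by_contra hne
        have hane : a ≠ b := hne
        -- show a = mm and b = mm would force a = b; so one of them differs from mm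
        have hamm : a ≠ mm ∨ b ≠ mm := by
          by_contra hc
          push_neg at hc
          exact hne (hc.1.trans hc.2.symm)
        have hstrict : (1 - α) * (a - mm) + α * (b - mm)
            < (1 - α) * (a * log (a / mm)) + α * (b * log (b / mm)) := by
          rcases hamm with hne' | hne'
          · have hsa : a - mm < a * log (a / mm) := by
              rcases eq_or_lt_of_le ha with h' | h'
              · rw [← h']; simp; linarith
              · exact uid_term_gt h' hmmpos hne'
            nlinarith [mul_le_mul_of_nonneg_left hgb h0.le]
          · have hsb : b - mm < b * log (b / mm) := by
              rcases eq_or_lt_of_le hb with h' | h'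
              · rw [← h']; simp; linarith
              · exact uid_term_gt h' hmmpos hne'
            nlinarith [mul_le_mul_of_nonneg_left hga h1α.le]
        rw [hzero, heq] at hstrict
        exact lt_irrefl 0 hstrict
      · intro heq
        subst heq
        have hmm_eq : mm = a := by simp only [hmm_def]; ring
        rcases eq_or_lt_of_le ha with h' | h'
        · simp [hmm_eq, ← h']
        · have : a / mm = 1 := by rw [hmm_eq]; field_simp
          simp [this]

theorem stmt6 {Ω : Type*} [MeasurableSpace Ω] (μ : Measure Ω) [SigmaFinite μ]
    (α : ℝ) (hα : α ∈ Set.Ioo (0 : ℝ) 1)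
    (P : Measure Ω) [IsProbabilityMeasure P]
    (p : Ω → ℝ) (hp : Measurable p) (hp0 : ∀ x, 0 ≤ p x)
    (hP : P = μ.withDensity (fun x => ENNReal.ofReal (p x)))
    (Q : Measure Ω) [IsProbabilityMeasure Q]
    (q : Ω → ℝ) (hq : Measurable q) (hq0 : ∀ x, 0 ≤ q x)
    (hQ : Q = μ.withDensity (fun x => ENNReal.ofReal (q x)))
    (MQ : Measure Ω) (hMQ : MQ = ENNReal.ofReal (1 - α) • P + ENNReal.ofReal α • Q)
    (m : Ω → ℝ) (hm : ∀ x, m x = (1 - α) * p x + α * q x)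
    (V : ℝ)
    (hV : V = (1 - α) * log (1 - α) + α * log α
        + (1 - α) * ∫ x, p x * log (p x / m x) ∂μ
        + α * ∫ x, q x * log (q x / m x) ∂μ) :
    (1 - α) * log (1 - α) + α * log α ≤ V ∧
    (V = (1 - α) * log (1 - α) + α * log α ↔ Q = P) := by
  obtain ⟨hα0, hα1⟩ := hα
  have h1α : (0:ℝ) < 1 - α := by linarith
  have hm0 : ∀ x, 0 ≤ m x := fun x => by
    rw [hm x]
    nlinarith [mul_nonneg h1α.le (hp0 x), mul_nonneg hα0.le (hq0 x)]
  have hmmeas : Measurable m := by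
    have hfun : m = fun x => (1 - α) * p x + α * q x := funext hm
    rw [hfun]; exact (measurable_const.mul hp).add (measurable_const.mul hq)
  -- integrability of the densities
  have hdens : ∀ (f : Ω → ℝ), Measurable f → (∀ x, 0 ≤ f x) →
      (μ.withDensity (fun x => ENNReal.ofReal (f x))) Set.univ = 1 → Integrable f μ := by
    intro f hf hf0 huniv
    refine ⟨hf.aestronglyMeasurable, ?_⟩
    have h1 : ∫⁻ x, ‖f x‖ₑ ∂μ = ∫⁻ x, ENNReal.ofReal (f x) ∂μ :=
      lintegral_congr fun x => Real.enorm_eq_ofReal (hf0 x)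
    have h2 : ∫⁻ x, ENNReal.ofReal (f x) ∂μ = 1 := by
      rw [← huniv, withDensity_apply _ MeasurableSet.univ, setLIntegral_univ]
    rw [HasFiniteIntegral, h1, h2]
    exact ENNReal.one_lt_top
  have hpint : Integrable p μ := hdens p hp hp0 (by rw [← hP]; exact measure_univ)
  have hqint : Integrable q μ := hdens q hq hq0 (by rw [← hQ]; exact measure_univ)
  have hmint : Integrable m μ := by
    have hfun : m = fun x => (1 - α) * p x + α * q x := funext hm
    rw [hfun]; exact (hpint.const_mul _).add (hqint.const_mul _)
  -- pointwise bounds on the log terms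
  have hkey_bound : ∀ (f : Ω → ℝ) (cc : ℝ), 0 < cc → (∀ x, 0 ≤ f x) →
      (∀ x, cc * f x ≤ m x) → ∀ x,
      f x - m x ≤ f x * log (f x / m x) ∧ f x * log (f x / m x) ≤ (-log cc) * f x := by
    intro f cc hcc hf0 hfm x
    constructor
    · refine uid_term_ge (hf0 x) (hm0 x) (fun hne => ?_)
      have hfx : 0 < f x := lt_of_le_of_ne (hf0 x) (Ne.symm hne)
      calc (0:ℝ) < cc * f x := by positivity
      _ ≤ m x := hfm x
    · rcases eq_or_lt_of_le (hf0 x) with h' | h'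
      · rw [← h']; simp
      · have hmx : 0 < m x := lt_of_lt_of_le (by positivity) (hfm x)
        have hdiv : f x / m x ≤ 1 / cc := by
          rw [div_le_div_iff₀ hmx hcc]
          nlinarith [hfm x]
        have hlog : log (f x / m x) ≤ log (1 / cc) :=
          Real.log_le_log (by positivity) hdiv
        have hloginv : log (1 / cc) = -log cc := by rw [one_div, Real.log_inv]
        rw [hloginv] at hlog
        calc f x * log (f x / m x) ≤ f x * (-log cc) :=
              mul_le_mul_of_nonneg_left hlog h'.le
        _ = (-log cc) * f x := mul_comm _ _
  -- integrability of the log integrands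
  have hintlog : ∀ (f : Ω → ℝ) (cc : ℝ), 0 < cc → cc ≤ 1 → Measurable f → Integrable f μ →
      (∀ x, 0 ≤ f x) → (∀ x, cc * f x ≤ m x) →
      Integrable (fun x => f x * log (f x / m x)) μ := by
    intro f cc hcc hcc1 hfme hfint hf0 hfm
    have hnn : 0 ≤ -log cc := by
      have := Real.log_nonpos hcc.le hcc1
      linarith
    have hmeas : AEStronglyMeasurable (fun x => f x * log (f x / m x)) μ :=
      (hfme.mul ((hfme.div hmmeas).log)).aestronglyMeasurable
    refine Integrable.mono' (((hfint.sub hmint).abs).add (hfint.const_mul (-log cc))) hmeas ?_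
    filter_upwards with x
    obtain ⟨hl, hu⟩ := hkey_bound f cc hcc hf0 hfm x
    have h2 : 0 ≤ (-log cc) * f x := mul_nonneg hnn (hf0 x)
    rw [Real.norm_eq_abs, abs_le]
    simp only [Pi.add_apply, Pi.sub_apply]
    constructor
    · linarith [neg_abs_le (f x - m x)]
    · linarith [abs_nonneg (f x - m x)]
  have hpm : ∀ x, (1 - α) * p x ≤ m x := fun x => by
    rw [hm x]; nlinarith [hq0 x]
  have hqm : ∀ x, α * q x ≤ m x := fun x => by
    rw [hm x]; nlinarith [hp0 x]
  have hIp : Integrable (fun x => p x * log (p x / m x)) μ :=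
    hintlog p (1 - α) h1α (by linarith) hp hpint hp0 hpm
  have hIq : Integrable (fun x => q x * log (q x / m x)) μ :=
    hintlog q α hα0 hα1.le hq hqint hq0 hqm
  set Ip := ∫ x, p x * log (p x / m x) ∂μ with hIp_def
  set Iq := ∫ x, q x * log (q x / m x) ∂μ with hIq_def
  have hsum : ∫ x, ((1 - α) * (p x * log (p x / m x)) + α * (q x * log (q x / m x))) ∂μ
      = (1 - α) * Ip + α * Iq := by
    rw [integral_add (hIp.const_mul _) (hIq.const_mul _), integral_const_mul,
      integral_const_mul]
  have hfnonneg : ∀ x, 0 ≤ (1 - α) * (p x * log (p x / m x))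
      + α * (q x * log (q x / m x)) := by
    intro x
    have hk := (uid_key hα0 hα1 (hp0 x) (hq0 x)).1
    rw [← hm x] at hk
    exact hk
  have hVnn : 0 ≤ (1 - α) * Ip + α * Iq := hsum ▸ integral_nonneg hfnonneg
  refine ⟨by rw [hV]; linarith, ?_, ?_⟩
  · intro hVeq
    have hI0 : ∫ x, ((1 - α) * (p x * log (p x / m x))
        + α * (q x * log (q x / m x))) ∂μ = 0 := by
      rw [hsum]; rw [hV] at hVeq; linarith
    have hfint : Integrable (fun x => (1 - α) * (p x * log (p x / m x))
        + α * (q x * log (q x / m x))) μ := (hIp.const_mul _).add (hIq.const_mul _)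
    have hae := (integral_eq_zero_iff_of_nonneg (fun x => hfnonneg x) hfint).mp hI0
    have hpq : ∀ᵐ x ∂μ, p x = q x := by
      filter_upwards [hae] with x hx
      have hk := (uid_key hα0 hα1 (hp0 x) (hq0 x)).2
      rw [← hm x] at hk
      exact hk.mp (by simpa using hx)
    rw [hP, hQ]
    exact (withDensity_eq_iff_of_sigmaFinite hq.ennreal_ofReal.aemeasurable
      hp.ennreal_ofReal.aemeasurable).mpr (hpq.mono fun x hx => by simp [hx])
  · intro hQP
    have hae : (fun x => ENNReal.ofReal (q x)) =ᵐ[μ] (fun x => ENNReal.ofReal (p x)) := by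
      rw [hP, hQ] at hQP
      exact (withDensity_eq_iff_of_sigmaFinite hq.ennreal_ofReal.aemeasurable
        hp.ennreal_ofReal.aemeasurable).mp hQP
    have hpq : ∀ᵐ x ∂μ, p x = q x := by
      filter_upwards [hae] with x hx
      exact ((ENNReal.ofReal_eq_ofReal_iff (hq0 x) (hp0 x)).mp hx).symm
    have hIp0 : Ip = 0 := by
      have hz : (fun x => p x * log (p x / m x)) =ᵐ[μ] (fun _ => (0:ℝ)) := by
        filter_upwards [hpq] with x hx
        have hmx : m x = p x := by rw [hm x, ← hx]; ring
        rcases eq_or_lt_of_le (hp0 x) with h' | h'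
        · simp [← h']
        · simp [hmx, div_self h'.ne']
      rw [hIp_def, integral_congr_ae hz, integral_const]
      simp
    have hIq0 : Iq = 0 := by
      have hz : (fun x => q x * log (q x / m x)) =ᵐ[μ] (fun _ => (0:ℝ)) := by
        filter_upwards [hpq] with x hx
        have hmx : m x = q x := by rw [hm x, hx]; ring
        rcases eq_or_lt_of_le (hq0 x) with h' | h'
        · simp [← h']
        · simp [hmx, div_self h'.ne']
      rw [hIq_def, integral_congr_ae hz, integral_const]
      simp
    rw [hV, hIp0, hIq0]
    ring
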